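/- For any fixed m ≤ t, every K_{1,t}-free graph on n vertices contains at most (n/m)·C(t-1, m-1) copies of K_m. Moreover, if t divides n, the disjoint union of n/t copies of K_t achieves this bound, so ex(n, K_m, K_{1,t}) = (n/m)·C(t-1, m-1) when t | n. -/

import Mathlib

/-- A graph is `K_{1,t}`-free iff it contains no subgraph isomorphic to the
star with `t` leaves. -/
def K1tFree {V : Type*} (G : SimpleGraph V) (t : ℕ) : Prop :=
  ¬ ∃ f : completeBipartiteGraph (Fin 1) (Fin t) →g G, Function.Injective f


lemma k1tFree_iff {n t : ℕ} (G : SimpleGraph (Fin n)) [DecidableRel G.Adj] :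
    K1tFree G t ↔ ∀ v, (G.neighborFinset v).card < t := by
  constructor
  · intro h v
    by_contra hc
    push_neg at hc
    obtain ⟨u, hu, huc⟩ := Finset.exists_subset_card_eq hc
    have e := u.equivFinOfCardEq huc
    apply h
    refine ⟨⟨Sum.elim (fun _ => v) (fun i => (e.symm i : Fin n)), ?_⟩, ?_⟩
    · rintro (a | a) (b | b) hab <;> simp_all [completeBipartiteGraph]
      · have : (e.symm b : Fin n) ∈ G.neighborFinset v := hu (e.symm b).2
        simpa [SimpleGraph.mem_neighborFinset] using this
      · have : (e.symm a : Fin n) ∈ G.neighborFinset v := hu (e.symm a).2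
        have := (SimpleGraph.mem_neighborFinset ..).1 this
        exact this.symm
    · rintro (a | a) (b | b) hab
      · simp [Subsingleton.elim a b]
      · exfalso
        have : (e.symm b : Fin n) ∈ G.neighborFinset v := hu (e.symm b).2
        rw [SimpleGraph.mem_neighborFinset] at this
        have hab' : v = (e.symm b : Fin n) := hab
        exact G.irrefl (hab' ▸ this)
      · exfalso
        have : (e.symm a : Fin n) ∈ G.neighborFinset v := hu (e.symm a).2
        rw [SimpleGraph.mem_neighborFinset] at this
        have hab' : (e.symm a : Fin n) = v := hab
        exact G.irrefl (hab' ▸ this)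
      · have hab' : (e.symm a : Fin n) = (e.symm b : Fin n) := hab
        have := e.symm.injective (Subtype.ext hab')
        simp [this]
  · rintro h ⟨f, hf⟩
    set v := f (Sum.inl 0) with hv
    have : (Finset.univ : Finset (Fin t)).card ≤ (G.neighborFinset v).card := by
      apply Finset.card_le_card_of_injOn (fun i => f (Sum.inr i))
      · intro i _
        rw [Finset.mem_coe, SimpleGraph.mem_neighborFinset]
        exact f.map_adj (by simp)
      · intro a _ b _ hab
        simpa using hf hab
    simp only [Finset.card_univ, Fintype.card_fin] at this
    exact absurd this (not_le.2 (h v))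

lemma part1 {n m t : ℕ} (hm : 1 ≤ m) (G : SimpleGraph (Fin n)) (hG : K1tFree G t) :
    m * (G.cliqueSet m).ncard ≤ n * (t - 1).choose (m - 1) := by
  classical
  have hdeg : ∀ v, (G.neighborFinset v).card ≤ t - 1 := fun v =>
    Nat.le_pred_of_lt ((k1tFree_iff G).1 hG v)
  set B := G.cliqueFinset m with hB
  have hnc : (G.cliqueSet m).ncard = B.card := by
    rw [← SimpleGraph.coe_cliqueFinset, Set.ncard_coe_finset]
  rw [hnc]
  have key : ∀ v, (B.filter (fun s => v ∈ s)).card ≤ (t - 1).choose (m - 1) := by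
    intro v
    calc (B.filter (fun s => v ∈ s)).card
        ≤ ((G.neighborFinset v).powersetCard (m - 1)).card := by
          apply Finset.card_le_card_of_injOn (fun s => s.erase v)
          · intro s hs
            simp only [Finset.mem_coe, Finset.mem_filter, hB, SimpleGraph.mem_cliqueFinset_iff] at hs
            obtain ⟨⟨hcl, hcard⟩, hv⟩ := hs
            rw [Finset.mem_coe, Finset.mem_powersetCard]
            refine ⟨fun w hw => ?_, by rw [Finset.card_erase_of_mem hv, hcard]⟩
            rw [Finset.mem_erase] at hw
            rw [SimpleGraph.mem_neighborFinset]
            exact hcl (Finset.mem_coe.2 hv) (Finset.mem_coe.2 hw.2) hw.1.symm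
          · intro s hs s' hs' hss
            simp only [Finset.mem_coe, Finset.mem_filter] at hs hs'
            simp only at hss
            rw [← Finset.insert_erase hs.2, hss, Finset.insert_erase hs'.2]
      _ = (G.neighborFinset v).card.choose (m - 1) := by
            rw [Finset.card_powersetCard]
      _ ≤ (t - 1).choose (m - 1) := Nat.choose_le_choose _ (hdeg v)
  calc m * B.card = ∑ _s ∈ B, m := by rw [Finset.sum_const, smul_eq_mul, mul_comm]
    _ = ∑ s ∈ B, s.card := by
        refine Finset.sum_congr rfl fun s hs => ?_
        rw [hB, SimpleGraph.mem_cliqueFinset_iff] at hs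
        exact hs.2.symm
    _ = ∑ s ∈ B, ∑ v : Fin n, if v ∈ s then 1 else 0 := by
        refine Finset.sum_congr rfl fun s _ => ?_
        rw [Finset.sum_ite_mem, Finset.univ_inter]
        simp
    _ = ∑ v : Fin n, ∑ s ∈ B, if v ∈ s then 1 else 0 := Finset.sum_comm
    _ = ∑ v : Fin n, (B.filter (fun s => v ∈ s)).card := by
        refine Finset.sum_congr rfl fun v _ => ?_
        rw [Finset.card_filter]
    _ ≤ ∑ _v : Fin n, (t - 1).choose (m - 1) := Finset.sum_le_sum fun v _ => key v
    _ = n * (t - 1).choose (m - 1) := by simp [mul_comm]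

lemma part2 {n m t : ℕ} (hm : 1 ≤ m) (hmt : m ≤ t) (ht : t ∣ n) :
    ∃ G : SimpleGraph (Fin n), K1tFree G t ∧
      m * (G.cliqueSet m).ncard = n * (t - 1).choose (m - 1) := by
  classical
  have ht0 : 0 < t := hm.trans hmt
  set q := n / t with hq
  have hqt : q * t = n := Nat.div_mul_cancel ht
  set G : SimpleGraph (Fin n) :=
    SimpleGraph.fromRel (fun a b => (a : ℕ) / t = (b : ℕ) / t) with hGdef
  have hadj : ∀ a b : Fin n, G.Adj a b ↔ a ≠ b ∧ (a : ℕ) / t = (b : ℕ) / t := by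
    intro a b
    rw [hGdef, SimpleGraph.fromRel_adj]
    constructor
    · rintro ⟨h1, h2 | h2⟩
      exacts [⟨h1, h2⟩, ⟨h1, h2.symm⟩]
    · rintro ⟨h1, h2⟩
      exact ⟨h1, Or.inl h2⟩
  set blk : ℕ → Finset (Fin n) :=
    fun k => Finset.univ.filter (fun a : Fin n => (a : ℕ) / t = k) with hblk
  have hmem : ∀ (k : ℕ) (a : Fin n), a ∈ blk k ↔ (a : ℕ) / t = k := by
    intro k a; simp [hblk]
  have hdivlt : ∀ a : Fin n, (a : ℕ) / t < q := by
    intro a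
    rw [Nat.div_lt_iff_lt_mul ht0, hqt]
    exact a.2
  have hblkcard : ∀ k < q, (blk k).card = t := by
    intro k hk
    have hbound : ∀ i : Fin t, k * t + (i : ℕ) < n := by
      intro i
      calc k * t + (i : ℕ) < k * t + t := by omega
        _ = (k + 1) * t := by ring
        _ ≤ q * t := Nat.mul_le_mul_right t (by omega)
        _ = n := hqt
    have : blk k = (Finset.univ : Finset (Fin t)).map
        ⟨fun (i : Fin t) => (⟨k * t + (i : ℕ), hbound i⟩ : Fin n), by
          intro i j hij
          simpa [Fin.ext_iff] using hij⟩ := by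
      ext a
      rw [hmem]
      simp only [Finset.mem_map, Finset.mem_univ, true_and, Function.Embedding.coeFn_mk]
      constructor
      · intro h
        refine ⟨⟨(a : ℕ) % t, Nat.mod_lt _ ht0⟩, ?_⟩
        apply Fin.ext
        show k * t + (a : ℕ) % t = (a : ℕ)
        rw [← h]
        exact Nat.div_add_mod' _ _
      · rintro ⟨i, rfl⟩
        show (k * t + (i : ℕ)) / t = k
        rw [add_comm, Nat.add_mul_div_right _ _ ht0, Nat.div_eq_of_lt i.2]
        omega
    rw [this, Finset.card_map, Finset.card_univ, Fintype.card_fin]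
  have hnbr : ∀ v : Fin n, G.neighborFinset v = (blk ((v : ℕ) / t)).erase v := by
    intro v
    ext w
    rw [SimpleGraph.mem_neighborFinset, hadj, Finset.mem_erase, hmem]
    constructor
    · rintro ⟨h1, h2⟩; exact ⟨fun e => h1 e.symm, h2.symm⟩
    · rintro ⟨h1, h2⟩; exact ⟨fun e => h1 e.symm, h2.symm⟩
  have hdeg : ∀ v : Fin n, (G.neighborFinset v).card < t := by
    intro v
    rw [hnbr v, Finset.card_erase_of_mem (by rw [hmem]),
      hblkcard _ (hdivlt v)]
    omega
  refine ⟨G, (k1tFree_iff G).2 hdeg, ?_⟩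
  have hclq : G.cliqueFinset m = (Finset.range q).biUnion
      (fun k => (blk k).powersetCard m) := by
    ext s
    rw [SimpleGraph.mem_cliqueFinset_iff]
    simp only [Finset.mem_biUnion, Finset.mem_range, Finset.mem_powersetCard]
    constructor
    · rintro ⟨hcl, hcard⟩
      have hne : s.Nonempty := Finset.card_pos.1 (by omega)
      obtain ⟨a, ha⟩ := hne
      refine ⟨(a : ℕ) / t, hdivlt a, fun b hb => ?_, hcard⟩
      rw [hmem]
      rcases eq_or_ne b a with rfl | hba
      · rfl
      · exact (((hadj a b).1 (hcl (Finset.mem_coe.2 ha) (Finset.mem_coe.2 hb) hba.symm)).2).symm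
    · rintro ⟨k, _, hsub, hcard⟩
      refine ⟨fun a ha b hb hab => ?_, hcard⟩
      rw [hadj]
      have h1 := (hmem k a).1 (hsub ha)
      have h2 := (hmem k b).1 (hsub hb)
      exact ⟨hab, h1.trans h2.symm⟩
  have hnc : (G.cliqueSet m).ncard = (G.cliqueFinset m).card := by
    rw [← SimpleGraph.coe_cliqueFinset, Set.ncard_coe_finset]
  have hcount : (G.cliqueFinset m).card = q * t.choose m := by
    rw [hclq, Finset.card_biUnion]
    · rw [Finset.sum_congr rfl (fun k hk => ?_), Finset.sum_const, Finset.card_range,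
        smul_eq_mul]
      rw [Finset.card_powersetCard, hblkcard k (Finset.mem_range.1 hk)]
    · intro k hk k' hk' hkk'
      simp only [Finset.disjoint_left]
      intro s hs hs'
      rw [Finset.mem_powersetCard] at hs hs'
      obtain ⟨a, ha⟩ := Finset.card_pos.1 (by omega : 0 < s.card)
      exact hkk' (((hmem k a).1 (hs.1 ha)).symm.trans ((hmem k' a).1 (hs'.1 ha)))
  rw [hnc, hcount]
  have hid : t * (t - 1).choose (m - 1) = t.choose m * m := by
    have h := Nat.add_one_mul_choose_eq (t - 1) (m - 1)
    rw [Nat.sub_add_cancel (by omega : 1 ≤ t), Nat.sub_add_cancel (by omega : 1 ≤ m)] at h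
    exact h
  calc m * (q * t.choose m) = q * (t.choose m * m) := by ring
    _ = q * (t * (t - 1).choose (m - 1)) := by rw [hid]
    _ = (q * t) * (t - 1).choose (m - 1) := by ring
    _ = n * (t - 1).choose (m - 1) := by rw [hqt]

theorem stmt_7 (n m t : ℕ) (hm : 1 ≤ m) (hmt : m ≤ t) :
    (∀ G : SimpleGraph (Fin n), K1tFree G t →
      m * (G.cliqueSet m).ncard ≤ n * (t - 1).choose (m - 1)) ∧
    (t ∣ n → ∃ G : SimpleGraph (Fin n), K1tFree G t ∧
      m * (G.cliqueSet m).ncard = n * (t - 1).choose (m - 1)) := by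
  exact ⟨fun G hG => part1 hm G hG, fun ht => part2 hm hmt ht⟩
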